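/- Let α, β, r, kᵣ, σ > 0 and define b = βr(2σkᵣ + 2 − 3αkᵣ)/(2rσkᵣ + 2r + 3αkᵣ). Suppose a differentiable function θ : ℝ → ℝ satisfies [1 + 3αkᵣ/(2r(σkᵣ+1))]·(θ'(t) + sin²θ(t)) = −β·[1 − 3αkᵣ/(2(σkᵣ+1))]·cos(2θ(t)) for all t. Then θ satisfies the Jeffery equation θ'(t) = −(1−b)·sin²θ(t) − b·cos²θ(t) for all t. -/

import Mathlib

theorem modified_jeffery_closure (α β r kr σ : ℝ)
    (hα : 0 < α) (hβ : 0 < β) (hr : 0 < r) (hkr : 0 < kr) (hσ : 0 < σ)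
    (b : ℝ) (hb : b = β * r * (2 * σ * kr + 2 - 3 * α * kr) / (2 * r * σ * kr + 2 * r + 3 * α * kr))
    (θ : ℝ → ℝ) (hθ : Differentiable ℝ θ)
    (heq : ∀ t : ℝ,
      (1 + 3 * α * kr / (2 * r * (σ * kr + 1))) * (deriv θ t + Real.sin (θ t) ^ 2) =
        -β * (1 - 3 * α * kr / (2 * (σ * kr + 1))) * Real.cos (2 * θ t)) :
    ∀ t : ℝ, deriv θ t = -(1 - b) * Real.sin (θ t) ^ 2 - b * Real.cos (θ t) ^ 2 := by
  intro t
  have h := heq t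
  have h1 : (0:ℝ) < σ * kr + 1 := by positivity
  have h2 : (0:ℝ) < 2 * r * σ * kr + 2 * r + 3 * α * kr := by positivity
  subst hb
  rw [Real.cos_two_mul] at h
  have hs : Real.sin (θ t) ^ 2 = 1 - Real.cos (θ t) ^ 2 := Real.sin_sq (θ t)
  field_simp at h ⊢
  rw [hs] at h ⊢
  apply mul_left_cancel₀ (show (2 * (σ * kr + 1)) ≠ 0 by positivity)
  linear_combination (2 * (σ * kr + 1)) * h
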